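/- Let $\delta:\mathbb{N}\to\mathbb{R}_{\geq 0}$ be non-increasing and suppose a class of permissive $q$-spin systems exhibits strong spatial mixing with rate $\delta$. Then for every instance, every vertex $v$, every $\Lambda\subseteq V$, and any two partial configurations $\sigma,\tau\in[q]^\Lambda$ with disagreement distance $\ell = \min\{\mathrm{dist}_G(v,u): u\in\Lambda, \sigma_u\neq\tau_u\} \geq 2$, it holds for all $a\in[q]$ (with convention $0/0=1$) that $\min\left(\left|\frac{\mu_v^\sigma(a)}{\mu_v^\tau(a)}-1\right|,\,1\right) \leq 10\,q\,|S_{\lfloor\ell/2\rfloor}(v)|\,\delta(\lfloor\ell/2\rfloor)$. -/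

import Mathlib

open Finset

/-- `x` agrees with `σ` on the set `S`. -/
def agreeOn {V : Type*} {q : ℕ} (x σ : V → Fin q) (S : Finset V) : Prop :=
  ∀ v ∈ S, x v = σ v

instance {V : Type*} {q : ℕ} (σ : V → Fin q) (S : Finset V) (x : V → Fin q) :
    Decidable (agreeOn x σ S) :=
  inferInstanceAs (Decidable (∀ v ∈ S, x v = σ v))

/-- The conditional marginal probability, under the distribution `μ` on `[q]^V`, of the
event "agreeing with `τ` on `S`", conditioned on agreeing with `σ` on `Λ`
(with the convention `x/0 = 0`). -/
noncomputable def condP {V : Type*} {q : ℕ} [Fintype V] [DecidableEq V]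
    (μ : (V → Fin q) → ℝ) (Λ : Finset V) (σ : V → Fin q)
    (S : Finset V) (τ : V → Fin q) : ℝ :=
  (∑ x ∈ Finset.univ.filter (fun x : V → Fin q => agreeOn x σ Λ ∧ agreeOn x τ S), μ x) /
  (∑ x ∈ Finset.univ.filter (fun x : V → Fin q => agreeOn x σ Λ), μ x)

/-- The weight of a configuration `σ` in the spin system given by vertex activities `b`
and (symmetric) edge interaction matrices `A` on the graph `G`: the product of vertex
weights times the product over all edges of the edge weights. -/
noncomputable def gibbsW {V : Type*} {q : ℕ} [Fintype V] [LinearOrder V]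
    (G : SimpleGraph V) [DecidableRel G.Adj]
    (b : V → Fin q → ℝ) (A : V → V → Fin q → Fin q → ℝ) (σ : V → Fin q) : ℝ :=
  (∏ v, b v (σ v)) *
  ∏ p ∈ Finset.univ.filter (fun p : V × V => G.Adj p.1 p.2 ∧ p.1 < p.2),
    A p.1 p.2 (σ p.1) (σ p.2)

/-- The Gibbs distribution of the spin system `(G, [q], b, A)`. -/
noncomputable def gibbsMu {V : Type*} {q : ℕ} [Fintype V] [LinearOrder V]
    (G : SimpleGraph V) [DecidableRel G.Adj]
    (b : V → Fin q → ℝ) (A : V → V → Fin q → Fin q → ℝ) (σ : V → Fin q) : ℝ :=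
  gibbsW G b A σ / ∑ τ : V → Fin q, gibbsW G b A τ

set_option linter.unusedSectionVars false
namespace Stmt14Aux

variable {V : Type*} [Fintype V] [LinearOrder V] {q : ℕ}
variable (G : SimpleGraph V) [DecidableRel G.Adj]
variable (b : V → Fin q → ℝ) (A : V → V → Fin q → Fin q → ℝ)

/-- Constrained partition function. -/
noncomputable def ZZ (Λ : Finset V) (σ : V → Fin q) : ℝ :=
  ∑ x ∈ Finset.univ.filter (fun x : V → Fin q => agreeOn x σ Λ), gibbsW G b A x

theorem ZZ_congr {Λ : Finset V} {σ σ' : V → Fin q} (h : ∀ w ∈ Λ, σ w = σ' w) :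
    ZZ G b A Λ σ = ZZ G b A Λ σ' := by
  unfold ZZ
  refine Finset.sum_congr (Finset.filter_congr fun x _ => ?_) fun _ _ => rfl
  unfold agreeOn
  constructor <;> intro hx w hw
  · rw [← h w hw]; exact hx w hw
  · rw [h w hw]; exact hx w hw

theorem ZZ_insert {Λ : Finset V} {u : V} (hu : u ∉ Λ) (σ : V → Fin q) :
    ZZ G b A Λ σ = ∑ c : Fin q, ZZ G b A (insert u Λ) (Function.update σ u c) := by
  unfold ZZ
  rw [← Finset.sum_fiberwise_of_maps_to (g := fun x : V → Fin q => x u) (t := Finset.univ)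
      (fun x _ => Finset.mem_univ _) (gibbsW G b A)]
  refine Finset.sum_congr rfl fun c _ => ?_
  refine Finset.sum_congr ?_ fun _ _ => rfl
  rw [Finset.filter_filter]
  refine Finset.filter_congr fun x _ => ?_
  unfold agreeOn
  constructor
  · intro hx w hw
    rcases Finset.mem_insert.mp hw with rfl | hw
    · rw [hx.2, Function.update_self]
    · rw [Function.update_of_ne (ne_of_mem_of_not_mem hw hu)]
      exact hx.1 w hw
  · intro hx
    constructor
    · intro w hw
      have := hx w (Finset.mem_insert_of_mem hw)
      rwa [Function.update_of_ne (ne_of_mem_of_not_mem hw hu)] at this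
    · have := hx u (Finset.mem_insert_self u Λ)
      rwa [Function.update_self] at this

theorem condP_eq (h0 : (∑ x : V → Fin q, gibbsW G b A x) ≠ 0) (Λ : Finset V) (σ : V → Fin q)
    (S : Finset V) (χ : V → Fin q) :
    condP (gibbsMu G b A) Λ σ S χ =
      (∑ x ∈ Finset.univ.filter (fun x : V → Fin q => agreeOn x σ Λ ∧ agreeOn x χ S),
        gibbsW G b A x) / ZZ G b A Λ σ := by
  unfold condP gibbsMu ZZ
  rw [← Finset.sum_div, ← Finset.sum_div, div_div_div_cancel_right₀]
  exact h0

theorem condP_single (h0 : (∑ x : V → Fin q, gibbsW G b A x) ≠ 0) {Λ : Finset V} {u : V}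
    (hu : u ∉ Λ) (σ : V → Fin q) (c : Fin q) :
    condP (gibbsMu G b A) Λ σ {u} (fun _ => c) =
      ZZ G b A (insert u Λ) (Function.update σ u c) / ZZ G b A Λ σ := by
  rw [condP_eq G b A h0]
  congr 1
  unfold ZZ
  refine Finset.sum_congr (Finset.filter_congr fun x _ => ?_) fun _ _ => rfl
  unfold agreeOn
  constructor
  · intro hx w hw
    rcases Finset.mem_insert.mp hw with rfl | hw
    · rw [Function.update_self]; exact hx.2 w (Finset.mem_singleton_self w)
    · rw [Function.update_of_ne (ne_of_mem_of_not_mem hw hu)]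
      exact hx.1 w hw
  · intro hx
    constructor
    · intro w hw
      have := hx w (Finset.mem_insert_of_mem hw)
      rwa [Function.update_of_ne (ne_of_mem_of_not_mem hw hu)] at this
    · intro w hw
      rw [Finset.mem_singleton] at hw; subst hw
      have := hx w (Finset.mem_insert_self w Λ)
      rwa [Function.update_self] at this

def Rep (T : Finset V) (β : V → Fin q) : Finset (V → Fin q) :=
  Finset.univ.filter (fun η => ∀ w, w ∉ T → η w = β w)

theorem mem_Rep {T : Finset V} {β η : V → Fin q} :
    η ∈ Rep T β ↔ ∀ w, w ∉ T → η w = β w := by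
  simp [Rep]

theorem self_mem_Rep {T : Finset V} {β : V → Fin q} : β ∈ Rep T β :=
  mem_Rep.mpr fun _ _ => rfl

theorem Rep_empty (β : V → Fin q) : Rep (∅ : Finset V) β = {β} := by
  ext η
  rw [mem_Rep, Finset.mem_singleton]
  constructor
  · intro h; funext w; exact h w (Finset.notMem_empty w)
  · rintro rfl w _; rfl

/-- override `ρ` by `η` on `T`. -/
def ovr (T : Finset V) (η ρ : V → Fin q) : V → Fin q :=
  fun w => if w ∈ T then η w else ρ w

theorem ovr_empty (η ρ : V → Fin q) : ovr (∅ : Finset V) η ρ = ρ := by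
  funext w; simp [ovr]

theorem ovr_eq_on_compl {T : Finset V} {η ρ : V → Fin q} {w : V} (hw : w ∉ T) :
    ovr T η ρ w = ρ w := by simp [ovr, hw]

theorem ovr_eq_on {T : Finset V} {η ρ : V → Fin q} {w : V} (hw : w ∈ T) :
    ovr T η ρ w = η w := by simp [ovr, hw]

theorem Rep_fiber {T : Finset V} {u : V} (hu : u ∉ T) (β : V → Fin q) (c : Fin q) :
    (Rep (insert u T) β).filter (fun η => η u = c) = Rep T (Function.update β u c) := by
  ext η
  simp only [Finset.mem_filter, mem_Rep, Finset.mem_insert]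
  constructor
  · rintro ⟨h1, h2⟩ w hw
    by_cases hwu : w = u
    · subst hwu; rw [h2, Function.update_self]
    · rw [Function.update_of_ne hwu]
      exact h1 w (fun h => h.elim hwu hw)
  · intro h
    have hηu : η u = c := by
      have := h u hu; rwa [Function.update_self] at this
    refine ⟨fun w hw => ?_, hηu⟩
    have hwu : w ≠ u := fun hh => hw (Or.inl hh)
    have hwT : w ∉ T := fun hh => hw (Or.inr hh)
    have := h w hwT
    rwa [Function.update_of_ne hwu] at this

theorem sum_Rep_insert {T : Finset V} {u : V} (hu : u ∉ T) (β : V → Fin q)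
    (f : (V → Fin q) → ℝ) :
    ∑ η ∈ Rep (insert u T) β, f η
      = ∑ c : Fin q, ∑ η ∈ Rep T (Function.update β u c), f η := by
  rw [← Finset.sum_fiberwise_of_maps_to (g := fun η : V → Fin q => η u) (t := Finset.univ)
      (fun x _ => Finset.mem_univ _) f]
  exact Finset.sum_congr rfl fun c _ =>
    Finset.sum_congr (Rep_fiber hu β c) fun _ _ => rfl

theorem mem_Rep_val {T : Finset V} {u : V} (hu : u ∉ T) {β η : V → Fin q} {c : Fin q}
    (hη : η ∈ Rep T (Function.update β u c)) : η u = c := by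
  have := mem_Rep.mp hη u hu
  rwa [Function.update_self] at this

theorem ovr_insert {T : Finset V} {u : V} (hu : u ∉ T) {η ρ : V → Fin q} {c : Fin q}
    (hη : η u = c) : ovr (insert u T) η ρ = ovr T η (Function.update ρ u c) := by
  funext w
  by_cases hwT : w ∈ T
  · rw [ovr_eq_on (Finset.mem_insert_of_mem hwT), ovr_eq_on hwT]
  · by_cases hwu : w = u
    · subst hwu
      rw [ovr_eq_on (Finset.mem_insert_self w T), ovr_eq_on_compl hwT, Function.update_self, hη]
    · rw [ovr_eq_on_compl (fun h => (Finset.mem_insert.mp h).elim hwu hwT),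
        ovr_eq_on_compl hwT, Function.update_of_ne hwu]

/-- Law of total partition function over the configurations on `T`. -/
theorem sum_ZZ_Rep (T : Finset V) :
    ∀ (Λ : Finset V) (β ρ : V → Fin q), Disjoint T Λ →
      ∑ η ∈ Rep T β, ZZ G b A (Λ ∪ T) (ovr T η ρ) = ZZ G b A Λ ρ := by
  induction T using Finset.induction_on with
  | empty =>
    intro Λ β ρ _
    rw [Rep_empty, Finset.sum_singleton, Finset.union_empty, ovr_empty]
  | @insert u T₀ hu ih =>
    intro Λ β ρ hdisj
    have huΛ : u ∉ Λ := fun h =>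
      Finset.disjoint_left.mp hdisj (Finset.mem_insert_self u T₀) h
    have hdisj' : ∀ c : Fin q, Disjoint T₀ (insert u Λ) := by
      intro c
      rw [Finset.disjoint_insert_right]
      exact ⟨hu, Finset.disjoint_of_subset_left (Finset.subset_insert u T₀) hdisj⟩
    rw [sum_Rep_insert hu]
    have key : ∀ c : Fin q, ∑ η ∈ Rep T₀ (Function.update β u c),
        ZZ G b A (Λ ∪ insert u T₀) (ovr (insert u T₀) η ρ)
        = ZZ G b A (insert u Λ) (Function.update ρ u c) := by
      intro c
      have := ih (insert u Λ) (Function.update β u c) (Function.update ρ u c) (hdisj' c)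
      rw [← this]
      refine Finset.sum_congr rfl fun η hη => ?_
      rw [ovr_insert hu (mem_Rep_val hu hη)]
      congr 1
      rw [Finset.union_insert, Finset.insert_union]
    rw [Finset.sum_congr rfl fun c _ => key c]
    exact (ZZ_insert G b A huΛ ρ).symm

theorem sum_Rep_ZZ_div (T : Finset V) (Λ : Finset V) (β ρ : V → Fin q) (hdisj : Disjoint T Λ)
    (hZ : ZZ G b A Λ ρ ≠ 0) :
    ∑ η ∈ Rep T β, ZZ G b A (Λ ∪ T) (ovr T η ρ) / ZZ G b A Λ ρ = 1 := by
  rw [← Finset.sum_div, sum_ZZ_Rep G b A T Λ β ρ hdisj, div_self hZ]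

/-- The key `ℓ¹` telescoping estimate between two boundary conditions. -/
theorem L3 (hperm : ∀ (Λ : Finset V) (σ : V → Fin q), 0 < ZZ G b A Λ σ)
    (h0 : (∑ x : V → Fin q, gibbsW G b A x) ≠ 0)
    (δ : ℕ → ℝ) (r : ℕ) (hδ : 0 ≤ δ r)
    (hSSM1 : ∀ (u : V) (Λ : Finset V) (σ τ : V → Fin q),
      (∀ w ∈ Λ, σ w ≠ τ w → (r : ℕ∞) ≤ G.edist u w) →
      (∑ a : Fin q, |condP (gibbsMu G b A) Λ σ {u} (fun _ => a) -
          condP (gibbsMu G b A) Λ τ {u} (fun _ => a)|) / 2 ≤ δ r)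
    (T : Finset V) :
    ∀ (Λ : Finset V) (β ρ1 ρ2 : V → Fin q), Disjoint T Λ →
      (∀ u ∈ T, ∀ w ∈ Λ, ρ1 w ≠ ρ2 w → (r : ℕ∞) ≤ G.edist u w) →
      ∑ η ∈ Rep T β, |ZZ G b A (Λ ∪ T) (ovr T η ρ1) / ZZ G b A Λ ρ1
        - ZZ G b A (Λ ∪ T) (ovr T η ρ2) / ZZ G b A Λ ρ2| ≤ 2 * T.card * δ r := by
  induction T using Finset.induction_on with
  | empty =>
    intro Λ β ρ1 ρ2 _ _
    rw [Rep_empty, Finset.sum_singleton, Finset.union_empty, ovr_empty, ovr_empty,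
      div_self (hperm Λ ρ1).ne', div_self (hperm Λ ρ2).ne']
    simp
  | @insert u T₀ hu ih =>
    intro Λ β ρ1 ρ2 hdisj hfar
    have huΛ : u ∉ Λ := fun h =>
      Finset.disjoint_left.mp hdisj (Finset.mem_insert_self u T₀) h
    have huT : u ∈ insert u T₀ := Finset.mem_insert_self u T₀
    have hdisj' : Disjoint T₀ (insert u Λ) := by
      rw [Finset.disjoint_insert_right]
      exact ⟨hu, Finset.disjoint_of_subset_left (Finset.subset_insert u T₀) hdisj⟩
    -- single site bound at u
    have hA : ∑ c : Fin q, |ZZ G b A (insert u Λ) (Function.update ρ1 u c) / ZZ G b A Λ ρ1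
        - ZZ G b A (insert u Λ) (Function.update ρ2 u c) / ZZ G b A Λ ρ2| ≤ 2 * δ r := by
      have h := hSSM1 u Λ ρ1 ρ2 (fun w hw hne => hfar u huT w hw hne)
      rw [div_le_iff₀ (by norm_num : (0:ℝ) < 2)] at h
      calc ∑ c : Fin q, |ZZ G b A (insert u Λ) (Function.update ρ1 u c) / ZZ G b A Λ ρ1
            - ZZ G b A (insert u Λ) (Function.update ρ2 u c) / ZZ G b A Λ ρ2|
          = ∑ c : Fin q, |condP (gibbsMu G b A) Λ ρ1 {u} (fun _ => c) -
              condP (gibbsMu G b A) Λ ρ2 {u} (fun _ => c)| := by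
            refine Finset.sum_congr rfl fun c _ => ?_
            rw [condP_single G b A h0 huΛ, condP_single G b A h0 huΛ]
        _ ≤ δ r * 2 := h
        _ = 2 * δ r := by ring
    rw [sum_Rep_insert hu]
    have hfar' : ∀ c : Fin q, ∀ u' ∈ T₀, ∀ w ∈ insert u Λ,
        Function.update ρ1 u c w ≠ Function.update ρ2 u c w → (r : ℕ∞) ≤ G.edist u' w := by
      intro c u' hu' w hw hne
      by_cases hwu : w = u
      · subst hwu
        rw [Function.update_self, Function.update_self] at hne
        exact absurd rfl hne
      · rw [Function.update_of_ne hwu, Function.update_of_ne hwu] at hne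
        exact hfar u' (Finset.mem_insert_of_mem hu') w
          ((Finset.mem_insert.mp hw).resolve_left hwu) hne
    have key : ∀ c : Fin q, ∀ η ∈ Rep T₀ (Function.update β u c),
        |ZZ G b A (Λ ∪ insert u T₀) (ovr (insert u T₀) η ρ1) / ZZ G b A Λ ρ1
          - ZZ G b A (Λ ∪ insert u T₀) (ovr (insert u T₀) η ρ2) / ZZ G b A Λ ρ2|
        ≤ (ZZ G b A (insert u Λ) (Function.update ρ1 u c) / ZZ G b A Λ ρ1) *
            |ZZ G b A ((insert u Λ) ∪ T₀) (ovr T₀ η (Function.update ρ1 u c)) /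
                ZZ G b A (insert u Λ) (Function.update ρ1 u c)
              - ZZ G b A ((insert u Λ) ∪ T₀) (ovr T₀ η (Function.update ρ2 u c)) /
                ZZ G b A (insert u Λ) (Function.update ρ2 u c)|
          + |ZZ G b A (insert u Λ) (Function.update ρ1 u c) / ZZ G b A Λ ρ1
              - ZZ G b A (insert u Λ) (Function.update ρ2 u c) / ZZ G b A Λ ρ2| *
            (ZZ G b A ((insert u Λ) ∪ T₀) (ovr T₀ η (Function.update ρ2 u c)) /
                ZZ G b A (insert u Λ) (Function.update ρ2 u c)) := by
      intro c η hη
      have hov : ∀ ρ : V → Fin q, ZZ G b A (Λ ∪ insert u T₀) (ovr (insert u T₀) η ρ)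
          = ZZ G b A ((insert u Λ) ∪ T₀) (ovr T₀ η (Function.update ρ u c)) := by
        intro ρ
        rw [ovr_insert hu (mem_Rep_val hu hη)]
        congr 1
        rw [Finset.union_insert, Finset.insert_union]
      rw [hov, hov]
      set a1 := ZZ G b A (insert u Λ) (Function.update ρ1 u c) / ZZ G b A Λ ρ1 with ha1
      set a2 := ZZ G b A (insert u Λ) (Function.update ρ2 u c) / ZZ G b A Λ ρ2 with ha2
      set b1 := ZZ G b A ((insert u Λ) ∪ T₀) (ovr T₀ η (Function.update ρ1 u c)) /
          ZZ G b A (insert u Λ) (Function.update ρ1 u c) with hb1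
      set b2 := ZZ G b A ((insert u Λ) ∪ T₀) (ovr T₀ η (Function.update ρ2 u c)) /
          ZZ G b A (insert u Λ) (Function.update ρ2 u c) with hb2
      have e1 : a1 * b1 = ZZ G b A ((insert u Λ) ∪ T₀) (ovr T₀ η (Function.update ρ1 u c)) /
          ZZ G b A Λ ρ1 := by
        rw [ha1, hb1, div_mul_div_comm, mul_comm (ZZ G b A Λ ρ1),
          mul_div_mul_left _ _ (hperm (insert u Λ) (Function.update ρ1 u c)).ne']
      have e2 : a2 * b2 = ZZ G b A ((insert u Λ) ∪ T₀) (ovr T₀ η (Function.update ρ2 u c)) /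
          ZZ G b A Λ ρ2 := by
        rw [ha2, hb2, div_mul_div_comm, mul_comm (ZZ G b A Λ ρ2),
          mul_div_mul_left _ _ (hperm (insert u Λ) (Function.update ρ2 u c)).ne']
      rw [← e1, ← e2]
      have ha1nn : 0 ≤ a1 := div_nonneg (hperm _ _).le (hperm _ _).le
      have hb2nn : 0 ≤ b2 := div_nonneg (hperm _ _).le (hperm _ _).le
      have expand : a1 * b1 - a2 * b2 = a1 * (b1 - b2) + (a1 - a2) * b2 := by ring
      calc |a1 * b1 - a2 * b2| = |a1 * (b1 - b2) + (a1 - a2) * b2| := by rw [expand]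
        _ ≤ |a1 * (b1 - b2)| + |(a1 - a2) * b2| := abs_add_le _ _
        _ = a1 * |b1 - b2| + |a1 - a2| * b2 := by
            rw [abs_mul, abs_mul, abs_of_nonneg ha1nn, abs_of_nonneg hb2nn]
    calc ∑ c : Fin q, ∑ η ∈ Rep T₀ (Function.update β u c),
          |ZZ G b A (Λ ∪ insert u T₀) (ovr (insert u T₀) η ρ1) / ZZ G b A Λ ρ1
            - ZZ G b A (Λ ∪ insert u T₀) (ovr (insert u T₀) η ρ2) / ZZ G b A Λ ρ2|
        ≤ ∑ c : Fin q,
            ((ZZ G b A (insert u Λ) (Function.update ρ1 u c) / ZZ G b A Λ ρ1) *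
              (2 * T₀.card * δ r)
            + |ZZ G b A (insert u Λ) (Function.update ρ1 u c) / ZZ G b A Λ ρ1
                - ZZ G b A (insert u Λ) (Function.update ρ2 u c) / ZZ G b A Λ ρ2| * 1) := by
          refine Finset.sum_le_sum fun c _ => ?_
          calc ∑ η ∈ Rep T₀ (Function.update β u c), _
              ≤ ∑ η ∈ Rep T₀ (Function.update β u c),
                ((ZZ G b A (insert u Λ) (Function.update ρ1 u c) / ZZ G b A Λ ρ1) *
                  |ZZ G b A ((insert u Λ) ∪ T₀) (ovr T₀ η (Function.update ρ1 u c)) /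
                      ZZ G b A (insert u Λ) (Function.update ρ1 u c)
                    - ZZ G b A ((insert u Λ) ∪ T₀) (ovr T₀ η (Function.update ρ2 u c)) /
                      ZZ G b A (insert u Λ) (Function.update ρ2 u c)|
                + |ZZ G b A (insert u Λ) (Function.update ρ1 u c) / ZZ G b A Λ ρ1
                    - ZZ G b A (insert u Λ) (Function.update ρ2 u c) / ZZ G b A Λ ρ2| *
                  (ZZ G b A ((insert u Λ) ∪ T₀) (ovr T₀ η (Function.update ρ2 u c)) /
                      ZZ G b A (insert u Λ) (Function.update ρ2 u c))) :=
                Finset.sum_le_sum (key c)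
            _ = (ZZ G b A (insert u Λ) (Function.update ρ1 u c) / ZZ G b A Λ ρ1) *
                  (∑ η ∈ Rep T₀ (Function.update β u c),
                    |ZZ G b A ((insert u Λ) ∪ T₀) (ovr T₀ η (Function.update ρ1 u c)) /
                        ZZ G b A (insert u Λ) (Function.update ρ1 u c)
                      - ZZ G b A ((insert u Λ) ∪ T₀) (ovr T₀ η (Function.update ρ2 u c)) /
                        ZZ G b A (insert u Λ) (Function.update ρ2 u c)|)
                + |ZZ G b A (insert u Λ) (Function.update ρ1 u c) / ZZ G b A Λ ρ1
                    - ZZ G b A (insert u Λ) (Function.update ρ2 u c) / ZZ G b A Λ ρ2| *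
                  (∑ η ∈ Rep T₀ (Function.update β u c),
                    ZZ G b A ((insert u Λ) ∪ T₀) (ovr T₀ η (Function.update ρ2 u c)) /
                      ZZ G b A (insert u Λ) (Function.update ρ2 u c)) := by
                rw [Finset.sum_add_distrib, Finset.mul_sum, Finset.mul_sum]
            _ ≤ (ZZ G b A (insert u Λ) (Function.update ρ1 u c) / ZZ G b A Λ ρ1) *
                  (2 * T₀.card * δ r)
                + |ZZ G b A (insert u Λ) (Function.update ρ1 u c) / ZZ G b A Λ ρ1
                    - ZZ G b A (insert u Λ) (Function.update ρ2 u c) / ZZ G b A Λ ρ2| * 1 := by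
                have i1 := ih (insert u Λ) (Function.update β u c) (Function.update ρ1 u c)
                  (Function.update ρ2 u c) hdisj' (hfar' c)
                have i2 : ∑ η ∈ Rep T₀ (Function.update β u c),
                    ZZ G b A ((insert u Λ) ∪ T₀) (ovr T₀ η (Function.update ρ2 u c)) /
                      ZZ G b A (insert u Λ) (Function.update ρ2 u c) = 1 :=
                  sum_Rep_ZZ_div G b A T₀ (insert u Λ) _ _ hdisj' (hperm _ _).ne'
                rw [i2]
                gcongr
                exact div_nonneg (hperm _ _).le (hperm _ _).le
      _ = (∑ c : Fin q, ZZ G b A (insert u Λ) (Function.update ρ1 u c)) / ZZ G b A Λ ρ1 *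
            (2 * T₀.card * δ r)
          + ∑ c : Fin q, |ZZ G b A (insert u Λ) (Function.update ρ1 u c) / ZZ G b A Λ ρ1
              - ZZ G b A (insert u Λ) (Function.update ρ2 u c) / ZZ G b A Λ ρ2| := by
          rw [Finset.sum_add_distrib, ← Finset.sum_mul, ← Finset.sum_div]
          simp
      _ ≤ 1 * (2 * T₀.card * δ r) + 2 * δ r := by
          rw [← ZZ_insert G b A huΛ ρ1, div_self (hperm Λ ρ1).ne']
          exact add_le_add (le_refl _) hA
      _ ≤ 2 * (insert u T₀).card * δ r := by
          rw [Finset.card_insert_of_notMem hu]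
          push_cast
          nlinarith [hδ]

theorem update_ovr {T : Finset V} {v : V} (hv : v ∉ T) (η σ : V → Fin q) (c : Fin q) :
    Function.update (ovr T η σ) v c = ovr T η (Function.update σ v c) := by
  funext w
  by_cases hwv : w = v
  · subst hwv
    rw [Function.update_self, ovr_eq_on_compl hv, Function.update_self]
  · rw [Function.update_of_ne hwv]
    by_cases hwT : w ∈ T
    · rw [ovr_eq_on hwT, ovr_eq_on hwT]
    · rw [ovr_eq_on_compl hwT, ovr_eq_on_compl hwT, Function.update_of_ne hwv]

/-- Comparison between the `T`-marginal with and without pinning `v`. -/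
theorem mixture (hperm : ∀ (Λ : Finset V) (σ : V → Fin q), 0 < ZZ G b A Λ σ)
    (h0 : (∑ x : V → Fin q, gibbsW G b A x) ≠ 0)
    (δ : ℕ → ℝ) (r : ℕ) (hδ : 0 ≤ δ r)
    (hSSM1 : ∀ (u : V) (Λ : Finset V) (σ τ : V → Fin q),
      (∀ w ∈ Λ, σ w ≠ τ w → (r : ℕ∞) ≤ G.edist u w) →
      (∑ a : Fin q, |condP (gibbsMu G b A) Λ σ {u} (fun _ => a) -
          condP (gibbsMu G b A) Λ τ {u} (fun _ => a)|) / 2 ≤ δ r)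
    (T Λ : Finset V) (v : V) (hvT : v ∉ T) (hvΛ : v ∉ Λ) (hdisj : Disjoint T Λ)
    (hfar : ∀ u ∈ T, (r : ℕ∞) ≤ G.edist u v)
    (β σ : V → Fin q) (a : Fin q) :
    ∑ η ∈ Rep T β,
      |ZZ G b A ((insert v Λ) ∪ T) (ovr T η (Function.update σ v a)) /
          ZZ G b A (insert v Λ) (Function.update σ v a)
        - ZZ G b A (Λ ∪ T) (ovr T η σ) / ZZ G b A Λ σ| ≤ 2 * T.card * δ r := by
  have hvΛT : v ∉ Λ ∪ T := by
    intro h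
    rcases Finset.mem_union.mp h with h | h
    · exact hvΛ h
    · exact hvT h
  have hdisjv : Disjoint T (insert v Λ) := by
    rw [Finset.disjoint_insert_right]
    exact ⟨hvT, hdisj⟩
  set Q : Fin q → (V → Fin q) → ℝ := fun a' η =>
    ZZ G b A ((insert v Λ) ∪ T) (ovr T η (Function.update σ v a')) /
      ZZ G b A (insert v Λ) (Function.update σ v a') with hQ
  set w : Fin q → ℝ := fun a' =>
    ZZ G b A (insert v Λ) (Function.update σ v a') / ZZ G b A Λ σ with hw
  have hwnn : ∀ a', 0 ≤ w a' := fun a' => div_nonneg (hperm _ _).le (hperm _ _).le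
  have hwsum : ∑ a', w a' = 1 := by
    rw [hw, ← Finset.sum_div, ← ZZ_insert G b A hvΛ σ, div_self (hperm Λ σ).ne']
  have hPdec : ∀ η, ZZ G b A (Λ ∪ T) (ovr T η σ) / ZZ G b A Λ σ
      = ∑ a', w a' * Q a' η := by
    intro η
    have e : ∀ a', w a' * Q a' η =
        ZZ G b A ((insert v Λ) ∪ T) (ovr T η (Function.update σ v a')) / ZZ G b A Λ σ := by
      intro a'
      rw [hw, hQ]
      dsimp only
      rw [div_mul_div_comm, mul_comm (ZZ G b A Λ σ),
        mul_div_mul_left _ _ (hperm (insert v Λ) (Function.update σ v a')).ne']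
    rw [Finset.sum_congr rfl fun a' _ => e a', ← Finset.sum_div]
    congr 1
    rw [ZZ_insert G b A hvΛT (ovr T η σ)]
    refine Finset.sum_congr rfl fun a' _ => ?_
    rw [update_ovr hvT, Finset.insert_union]
  have hL3 : ∀ a', ∑ η ∈ Rep T β, |Q a η - Q a' η| ≤ 2 * T.card * δ r := by
    intro a'
    refine L3 G b A hperm h0 δ r hδ hSSM1 T (insert v Λ) β
      (Function.update σ v a) (Function.update σ v a') hdisjv ?_
    intro u hu x hx hne
    by_cases hxv : x = v
    · subst hxv; exact hfar u hu
    · rw [Function.update_of_ne hxv, Function.update_of_ne hxv] at hne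
      exact absurd rfl hne
  calc ∑ η ∈ Rep T β, |Q a η - ZZ G b A (Λ ∪ T) (ovr T η σ) / ZZ G b A Λ σ|
      ≤ ∑ η ∈ Rep T β, ∑ a', w a' * |Q a η - Q a' η| := by
        refine Finset.sum_le_sum fun η _ => ?_
        rw [hPdec η]
        have e2 : Q a η - ∑ a', w a' * Q a' η = ∑ a', w a' * (Q a η - Q a' η) := by
          rw [Finset.sum_congr rfl (fun a' _ => mul_sub (w a') (Q a η) (Q a' η)),
            Finset.sum_sub_distrib, ← Finset.sum_mul, hwsum, one_mul]
        calc |Q a η - ∑ a', w a' * Q a' η| = |∑ a', w a' * (Q a η - Q a' η)| := by rw [e2]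
          _ ≤ ∑ a', |w a' * (Q a η - Q a' η)| := Finset.abs_sum_le_sum_abs _ _
          _ = ∑ a', w a' * |Q a η - Q a' η| := by
              refine Finset.sum_congr rfl fun a' _ => ?_
              rw [abs_mul, abs_of_nonneg (hwnn a')]
    _ = ∑ a', w a' * ∑ η ∈ Rep T β, |Q a η - Q a' η| := by
        rw [Finset.sum_comm]
        exact Finset.sum_congr rfl fun a' _ => (Finset.mul_sum _ _ _).symm
    _ ≤ ∑ a', w a' * (2 * T.card * δ r) := by
        refine Finset.sum_le_sum fun a' _ => ?_
        exact mul_le_mul_of_nonneg_left (hL3 a') (hwnn a')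
    _ = 2 * T.card * δ r := by rw [← Finset.sum_mul, hwsum, one_mul]

/-- The strict inner ball as a finset. -/
noncomputable def inn (v : V) (r : ℕ) : Finset V :=
  Finset.univ.filter (fun w => G.edist v w < (r : ℕ∞))

/-- The edge set as a finset of ordered pairs. -/
noncomputable def edges : Finset (V × V) :=
  Finset.univ.filter (fun p : V × V => G.Adj p.1 p.2 ∧ p.1 < p.2)

noncomputable def FF (v : V) (r : ℕ) (x : V → Fin q) : ℝ :=
  (∏ w ∈ inn G v r, b w (x w)) *
    ∏ p ∈ (edges G).filter (fun p => p.1 ∈ inn G v r ∨ p.2 ∈ inn G v r),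
      A p.1 p.2 (x p.1) (x p.2)

noncomputable def GG0 (v : V) (r : ℕ) (x : V → Fin q) : ℝ :=
  (∏ w ∈ (inn G v r)ᶜ, b w (x w)) *
    ∏ p ∈ (edges G).filter (fun p => ¬(p.1 ∈ inn G v r ∨ p.2 ∈ inn G v r)),
      A p.1 p.2 (x p.1) (x p.2)

theorem gibbsW_eq_FF_GG0 (v : V) (r : ℕ) (x : V → Fin q) :
    gibbsW G b A x = FF G b A v r x * GG0 G b A v r x := by
  unfold gibbsW FF GG0
  rw [mul_mul_mul_comm]
  congr 1
  · rw [Finset.prod_mul_prod_compl]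
  · rw [Finset.prod_filter_mul_prod_filter_not]
    rfl

theorem adj_ball {v x y : V} {r : ℕ} (hadj : G.Adj x y) (hx : G.edist v x < (r : ℕ∞)) :
    G.edist v y ≤ (r : ℕ∞) := by
  have h1 : G.edist x y ≤ 1 := by
    simpa using SimpleGraph.edist_le hadj.toWalk
  calc G.edist v y ≤ G.edist v x + G.edist x y := SimpleGraph.edist_triangle
    _ ≤ G.edist v x + 1 := add_le_add (le_refl _) h1
    _ ≤ (r : ℕ∞) := (ENat.add_one_le_iff hx.ne_top).mpr hx

theorem mem_inn {v w : V} {r : ℕ} : w ∈ inn G v r ↔ G.edist v w < (r : ℕ∞) := by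
  simp [inn]

theorem FF_congr {v : V} {r : ℕ} {x y : V → Fin q}
    (h : ∀ w, G.edist v w ≤ (r : ℕ∞) → x w = y w) :
    FF G b A v r x = FF G b A v r y := by
  unfold FF
  congr 1
  · exact Finset.prod_congr rfl fun w hw => by
      rw [h w (le_of_lt ((mem_inn G).mp hw))]
  · refine Finset.prod_congr rfl fun p hp => ?_
    rcases Finset.mem_filter.mp hp with ⟨hpe, hpi⟩
    have hadj : G.Adj p.1 p.2 := ((Finset.mem_filter.mp hpe).2).1
    have hboth : G.edist v p.1 ≤ (r : ℕ∞) ∧ G.edist v p.2 ≤ (r : ℕ∞) := by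
      rcases hpi with h1 | h2
      · exact ⟨le_of_lt ((mem_inn G).mp h1), adj_ball G hadj ((mem_inn G).mp h1)⟩
      · exact ⟨adj_ball G hadj.symm ((mem_inn G).mp h2), le_of_lt ((mem_inn G).mp h2)⟩
    rw [h p.1 hboth.1, h p.2 hboth.2]

theorem GG0_congr {v : V} {r : ℕ} {x y : V → Fin q}
    (h : ∀ w, ¬ (G.edist v w < (r : ℕ∞)) → x w = y w) :
    GG0 G b A v r x = GG0 G b A v r y := by
  unfold GG0
  congr 1
  · exact Finset.prod_congr rfl fun w hw => by
      rw [h w (fun hc => (Finset.mem_compl.mp hw) ((mem_inn G).mpr hc))]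
  · refine Finset.prod_congr rfl fun p hp => ?_
    rcases Finset.mem_filter.mp hp with ⟨_, hpi⟩
    push_neg at hpi
    rw [h p.1 (fun hc => hpi.1 ((mem_inn G).mpr hc)),
      h p.2 (fun hc => hpi.2 ((mem_inn G).mpr hc))]

theorem ZZ_split (v : V) (r : ℕ) (Δ : Finset V)
    (hsph : ∀ w, G.edist v w = (r : ℕ∞) → w ∈ Δ) (ξ χ : V → Fin q) :
    ZZ G b A Δ ξ =
      (∑ y ∈ Finset.univ.filter (fun y : V → Fin q =>
          agreeOn y ξ Δ ∧ ∀ w, w ∉ inn G v r → y w = ξ w), FF G b A v r y) *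
      (∑ z ∈ Finset.univ.filter (fun z : V → Fin q =>
          (∀ w ∈ Δ, w ∉ inn G v r → z w = ξ w) ∧ ∀ w ∈ inn G v r, z w = χ w),
        GG0 G b A v r z) := by
  set I := inn G v r with hI
  rw [Finset.sum_mul_sum, ← Finset.sum_product']
  unfold ZZ
  refine Finset.sum_nbij' (i := fun x => (ovr I x ξ, ovr I χ x))
    (j := fun yz => ovr I yz.1 yz.2) ?_ ?_ ?_ ?_ ?_
  · intro x hx
    have hxa : agreeOn x ξ Δ := (Finset.mem_filter.mp hx).2
    have h1 : ovr I x ξ ∈ Finset.univ.filter (fun y : V → Fin q =>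
        agreeOn y ξ Δ ∧ ∀ w, w ∉ I → y w = ξ w) := by
      rw [Finset.mem_filter]
      refine ⟨Finset.mem_univ _, fun w hw => ?_, fun w hw => ovr_eq_on_compl hw⟩
      by_cases hwi : w ∈ I
      · rw [ovr_eq_on hwi]; exact hxa w hw
      · rw [ovr_eq_on_compl hwi]
    have h2 : ovr I χ x ∈ Finset.univ.filter (fun z : V → Fin q =>
        (∀ w ∈ Δ, w ∉ I → z w = ξ w) ∧ ∀ w ∈ I, z w = χ w) := by
      rw [Finset.mem_filter]
      refine ⟨Finset.mem_univ _, fun w hw hwi => ?_, fun w hw => ovr_eq_on hw⟩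
      rw [ovr_eq_on_compl hwi]; exact hxa w hw
    exact Finset.mem_product.mpr ⟨h1, h2⟩
  · intro yz hyz
    rw [Finset.mem_product] at hyz
    have hy := (Finset.mem_filter.mp hyz.1).2
    have hz := (Finset.mem_filter.mp hyz.2).2
    rw [Finset.mem_filter]
    refine ⟨Finset.mem_univ _, fun w hw => ?_⟩
    beta_reduce
    by_cases hwi : w ∈ I
    · rw [ovr_eq_on hwi]; exact hy.1 w hw
    · rw [ovr_eq_on_compl hwi]; exact hz.1 w hw hwi
  · intro x _
    funext w
    show ovr I (ovr I x ξ) (ovr I χ x) w = x w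
    by_cases hwi : w ∈ I
    · rw [ovr_eq_on hwi, ovr_eq_on hwi]
    · rw [ovr_eq_on_compl hwi, ovr_eq_on_compl hwi]
  · intro yz hyz
    rw [Finset.mem_product] at hyz
    have hy := (Finset.mem_filter.mp hyz.1).2
    have hz := (Finset.mem_filter.mp hyz.2).2
    have e1 : ovr I (ovr I yz.1 yz.2) ξ = yz.1 := by
      funext w
      beta_reduce
      by_cases hwi : w ∈ I
      · rw [ovr_eq_on hwi, ovr_eq_on hwi]
      · rw [ovr_eq_on_compl hwi, (hy.2 w hwi).symm]
    have e2 : ovr I χ (ovr I yz.1 yz.2) = yz.2 := by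
      funext w
      by_cases hwi : w ∈ I
      · rw [ovr_eq_on hwi, (hz.2 w hwi).symm]
      · rw [ovr_eq_on_compl hwi, ovr_eq_on_compl hwi]
    exact Prod.ext e1 e2
  · intro x hx
    have hxa : agreeOn x ξ Δ := (Finset.mem_filter.mp hx).2
    rw [gibbsW_eq_FF_GG0 G b A v r]
    have eF : FF G b A v r x = FF G b A v r (ovr I x ξ) := by
      refine FF_congr G b A fun w hw => ?_
      rcases lt_or_eq_of_le hw with hlt | heq
      · rw [ovr_eq_on ((mem_inn G).mpr hlt)]
      · have hwi : w ∉ I := fun hc => absurd ((mem_inn G).mp hc) (by rw [heq]; exact lt_irrefl _)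
        rw [ovr_eq_on_compl hwi]
        exact hxa w (hsph w heq)
    have eG : GG0 G b A v r x = GG0 G b A v r (ovr I χ x) := by
      refine GG0_congr G b A fun w hw => ?_
      rw [ovr_eq_on_compl (fun hc => hw ((mem_inn G).mp hc))]
    rw [eF, eG]

theorem sumFF_congr (v : V) (r : ℕ) (Δ : Finset V)
    (hsph : ∀ w, G.edist v w = (r : ℕ∞) → w ∈ Δ) (ξ1 ξ2 : V → Fin q)
    (hag : ∀ w ∈ Δ, G.edist v w ≤ (r : ℕ∞) → ξ1 w = ξ2 w) :
    ∑ y ∈ Finset.univ.filter (fun y : V → Fin q =>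
        agreeOn y ξ1 Δ ∧ ∀ w, w ∉ inn G v r → y w = ξ1 w), FF G b A v r y
    = ∑ y ∈ Finset.univ.filter (fun y : V → Fin q =>
        agreeOn y ξ2 Δ ∧ ∀ w, w ∉ inn G v r → y w = ξ2 w), FF G b A v r y := by
  set I := inn G v r with hI
  have key : ∀ (ζ1 ζ2 : V → Fin q), (∀ w ∈ Δ, G.edist v w ≤ (r : ℕ∞) → ζ1 w = ζ2 w) →
      ∀ y, (agreeOn y ζ1 Δ ∧ ∀ w, w ∉ I → y w = ζ1 w) →
      ovr I y ζ2 ∈ Finset.univ.filter (fun y : V → Fin q =>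
        agreeOn y ζ2 Δ ∧ ∀ w, w ∉ I → y w = ζ2 w) := by
    intro ζ1 ζ2 hagg y h
    rw [Finset.mem_filter]
    refine ⟨Finset.mem_univ _, fun w hw => ?_, fun w hw => ovr_eq_on_compl hw⟩
    by_cases hwi : w ∈ I
    · rw [ovr_eq_on hwi, h.1 w hw]
      exact hagg w hw (le_of_lt ((mem_inn G).mp hwi))
    · rw [ovr_eq_on_compl hwi]
  have hag2 : ∀ w ∈ Δ, G.edist v w ≤ (r : ℕ∞) → ξ2 w = ξ1 w := fun w hw hle =>
    (hag w hw hle).symm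
  refine Finset.sum_nbij' (i := fun y => ovr I y ξ2) (j := fun y => ovr I y ξ1) ?_ ?_ ?_ ?_ ?_
  · intro y hy
    exact key ξ1 ξ2 hag y (Finset.mem_filter.mp hy).2
  · intro y hy
    exact key ξ2 ξ1 hag2 y (Finset.mem_filter.mp hy).2
  · intro y hy
    have h := (Finset.mem_filter.mp hy).2
    funext w
    show ovr I (ovr I y ξ2) ξ1 w = y w
    by_cases hwi : w ∈ I
    · rw [ovr_eq_on hwi, ovr_eq_on hwi]
    · rw [ovr_eq_on_compl hwi, (h.2 w hwi).symm]
  · intro y hy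
    have h := (Finset.mem_filter.mp hy).2
    funext w
    show ovr I (ovr I y ξ1) ξ2 w = y w
    by_cases hwi : w ∈ I
    · rw [ovr_eq_on hwi, ovr_eq_on hwi]
    · rw [ovr_eq_on_compl hwi, (h.2 w hwi).symm]
  · intro y hy
    have h := (Finset.mem_filter.mp hy).2
    show FF G b A v r y = FF G b A v r (ovr I y ξ2)
    refine FF_congr G b A fun w hw => ?_
    by_cases hwi : w ∈ I
    · rw [ovr_eq_on hwi]
    · rw [ovr_eq_on_compl hwi, h.2 w hwi]
      rcases lt_or_eq_of_le hw with hlt | heq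
      · exact absurd ((mem_inn G).mpr hlt) hwi
      · exact hag w (hsph w heq) (le_of_eq heq)

theorem lemA (v : V) (r : ℕ) (hr : 1 ≤ r) (Δ : Finset V) (hvΔ : v ∉ Δ)
    (hsph : ∀ w, G.edist v w = (r : ℕ∞) → w ∈ Δ) (a : Fin q) (ξ1 ξ2 : V → Fin q)
    (hag : ∀ w ∈ Δ, G.edist v w ≤ (r : ℕ∞) → ξ1 w = ξ2 w) :
    ZZ G b A (insert v Δ) (Function.update ξ1 v a) * ZZ G b A Δ ξ2 =
      ZZ G b A (insert v Δ) (Function.update ξ2 v a) * ZZ G b A Δ ξ1 := by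
  have hrpos : (0 : ℕ∞) < (r : ℕ∞) := by exact_mod_cast Nat.lt_of_lt_of_le Nat.zero_lt_one hr
  have hvinn : v ∈ inn G v r := (mem_inn G).mpr (by rw [SimpleGraph.edist_self]; exact hrpos)
  have hsph' : ∀ w, G.edist v w = (r : ℕ∞) → w ∈ insert v Δ := fun w h =>
    Finset.mem_insert_of_mem (hsph w h)
  have hag' : ∀ w ∈ insert v Δ, G.edist v w ≤ (r : ℕ∞) →
      Function.update ξ1 v a w = Function.update ξ2 v a w := by
    intro w hw hle
    rcases Finset.mem_insert.mp hw with rfl | hw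
    · rw [Function.update_self, Function.update_self]
    · have hwv : w ≠ v := fun hh => hvΔ (hh ▸ hw)
      rw [Function.update_of_ne hwv, Function.update_of_ne hwv]
      exact hag w hw hle
  -- GG0-factor equality between insert and non-insert versions
  have hGfilter : ∀ ξ : V → Fin q,
      (Finset.univ.filter (fun z : V → Fin q =>
        (∀ w ∈ insert v Δ, w ∉ inn G v r → z w = Function.update ξ v a w) ∧
          ∀ w ∈ inn G v r, z w = ξ1 w))
      = (Finset.univ.filter (fun z : V → Fin q =>
        (∀ w ∈ Δ, w ∉ inn G v r → z w = ξ w) ∧ ∀ w ∈ inn G v r, z w = ξ1 w)) := by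
    intro ξ
    refine Finset.filter_congr fun z _ => ?_
    constructor
    · rintro ⟨h1, h2⟩
      refine ⟨fun w hw hwi => ?_, h2⟩
      have hwv : w ≠ v := fun hh => hvΔ (hh ▸ hw)
      have := h1 w (Finset.mem_insert_of_mem hw) hwi
      rwa [Function.update_of_ne hwv] at this
    · rintro ⟨h1, h2⟩
      refine ⟨fun w hw hwi => ?_, h2⟩
      rcases Finset.mem_insert.mp hw with rfl | hw
      · exact absurd hvinn hwi
      · have hwv : w ≠ v := fun hh => hvΔ (hh ▸ hw)
        rw [Function.update_of_ne hwv]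
        exact h1 w hw hwi
  rw [ZZ_split G b A v r Δ hsph ξ1 ξ1, ZZ_split G b A v r Δ hsph ξ2 ξ1,
    ZZ_split G b A v r (insert v Δ) hsph' (Function.update ξ1 v a) ξ1,
    ZZ_split G b A v r (insert v Δ) hsph' (Function.update ξ2 v a) ξ1,
    sumFF_congr G b A v r Δ hsph ξ1 ξ2 hag,
    sumFF_congr G b A v r (insert v Δ) hsph' (Function.update ξ1 v a)
      (Function.update ξ2 v a) hag',
    hGfilter ξ1, hGfilter ξ2]
  ring

theorem div_chain {x y z : ℝ} (hy : y ≠ 0) : x / y * (y / z) = x / z := by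
  rw [div_mul_div_comm, mul_comm x y, mul_div_mul_left _ _ hy]

/-- Purely arithmetic assembly of the final estimate. -/
theorem assembly {ι : Type*} [DecidableEq ι] (I : Finset ι) (P1 P2 Q1 Q2 p : ι → ℝ)
    (μ1 μ2 K : ℝ)
    (hμ1 : 0 < μ1) (hμ2 : 0 < μ2)
    (hP1pos : ∀ η ∈ I, 0 < P1 η) (hP2pos : ∀ η ∈ I, 0 < P2 η)
    (hsumP1 : ∑ η ∈ I, P1 η = 1)
    (link1 : ∀ η ∈ I, Q1 η * μ1 = P1 η * p η)
    (link2 : ∀ η ∈ I, Q2 η * μ2 = P2 η * p η)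
    (hD12 : ∑ η ∈ I, |P1 η - P2 η| ≤ 2 * K)
    (hQP1 : ∑ η ∈ I, |Q1 η - P1 η| ≤ 2 * K)
    (hQP2 : ∑ η ∈ I, |Q2 η - P2 η| ≤ 2 * K)
    (hK0 : 0 ≤ K) (hK : K ≤ 1 / 20) :
    |μ1 / μ2 - 1| ≤ 20 * K := by
  have D1 : ∑ η ∈ I, P1 η * |p η - μ1| ≤ 2 * K * μ1 := by
    have he : ∀ η ∈ I, P1 η * |p η - μ1| = |Q1 η - P1 η| * μ1 := by
      intro η hη
      have hkey : P1 η * (p η - μ1) = (Q1 η - P1 η) * μ1 := by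
        have hl := link1 η hη
        calc P1 η * (p η - μ1) = P1 η * p η - P1 η * μ1 := by ring
          _ = Q1 η * μ1 - P1 η * μ1 := by rw [hl]
          _ = (Q1 η - P1 η) * μ1 := by ring
      calc P1 η * |p η - μ1| = |P1 η * (p η - μ1)| := by
            rw [abs_mul, abs_of_pos (hP1pos η hη)]
        _ = |(Q1 η - P1 η) * μ1| := by rw [hkey]
        _ = |Q1 η - P1 η| * μ1 := by rw [abs_mul, abs_of_pos hμ1]
    rw [Finset.sum_congr rfl he, ← Finset.sum_mul]
    exact mul_le_mul_of_nonneg_right hQP1 hμ1.le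
  have D2 : ∑ η ∈ I, P2 η * |p η - μ2| ≤ 2 * K * μ2 := by
    have he : ∀ η ∈ I, P2 η * |p η - μ2| = |Q2 η - P2 η| * μ2 := by
      intro η hη
      have hkey : P2 η * (p η - μ2) = (Q2 η - P2 η) * μ2 := by
        have hl := link2 η hη
        calc P2 η * (p η - μ2) = P2 η * p η - P2 η * μ2 := by ring
          _ = Q2 η * μ2 - P2 η * μ2 := by rw [hl]
          _ = (Q2 η - P2 η) * μ2 := by ring
      calc P2 η * |p η - μ2| = |P2 η * (p η - μ2)| := by
            rw [abs_mul, abs_of_pos (hP2pos η hη)]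
        _ = |(Q2 η - P2 η) * μ2| := by rw [hkey]
        _ = |Q2 η - P2 η| * μ2 := by rw [abs_mul, abs_of_pos hμ2]
    rw [Finset.sum_congr rfl he, ← Finset.sum_mul]
    exact mul_le_mul_of_nonneg_right hQP2 hμ2.le
  set B1 := I.filter (fun η => ¬ (|p η - μ1| ≤ 5 * K * μ1)) with hB1def
  set B2 := I.filter (fun η => ¬ (|p η - μ2| ≤ 5 * K * μ2)) with hB2def
  have hB1sub : B1 ⊆ I := Finset.filter_subset _ _
  have hB2sub : B2 ⊆ I := Finset.filter_subset _ _
  have hgen : ∀ (P : ι → ℝ) (μ : ℝ), 0 < μ → (∀ η ∈ I, 0 < P η) →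
      (∑ η ∈ I, P η * |p η - μ| ≤ 2 * K * μ) →
      ∑ η ∈ I.filter (fun η => ¬ (|p η - μ| ≤ 5 * K * μ)), P η ≤ 2 / 5 := by
    intro P μ hμ hPpos D
    set B := I.filter (fun η => ¬ (|p η - μ| ≤ 5 * K * μ)) with hBdef
    have hBsub : B ⊆ I := Finset.filter_subset _ _
    have hstep : 5 * K * μ * (∑ η ∈ B, P η) ≤ 2 * K * μ := by
      calc 5 * K * μ * (∑ η ∈ B, P η) = ∑ η ∈ B, P η * (5 * K * μ) := by
            rw [Finset.mul_sum]
            exact Finset.sum_congr rfl fun η _ => by ring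
        _ ≤ ∑ η ∈ B, P η * |p η - μ| := by
            refine Finset.sum_le_sum fun η hη => ?_
            have hb := Finset.mem_filter.mp hη
            exact mul_le_mul_of_nonneg_left (le_of_lt (lt_of_not_ge hb.2))
              (hPpos η hb.1).le
        _ ≤ ∑ η ∈ I, P η * |p η - μ| := by
            refine Finset.sum_le_sum_of_subset_of_nonneg hBsub fun η hη _ => ?_
            exact mul_nonneg (hPpos η hη).le (abs_nonneg _)
        _ ≤ 2 * K * μ := D
    rcases eq_or_lt_of_le hK0 with hKz | hKpos
    · have hBe : B = ∅ := by
        rw [Finset.eq_empty_iff_forall_notMem]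
        intro η hη
        have hb := Finset.mem_filter.mp hη
        have hnn : ∀ x ∈ I, 0 ≤ P x * |p x - μ| := fun x hx =>
          mul_nonneg (hPpos x hx).le (abs_nonneg _)
        have hsle : ∑ x ∈ I, P x * |p x - μ| ≤ 0 := by
          rw [← hKz] at D; simpa using D
        have hz : ∀ x ∈ I, P x * |p x - μ| = 0 :=
          (Finset.sum_eq_zero_iff_of_nonneg hnn).mp
            (le_antisymm hsle (Finset.sum_nonneg hnn))
        have h1 := (mul_eq_zero.mp (hz η hb.1)).resolve_left (hPpos η hb.1).ne'
        refine hb.2 ?_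
        rw [h1, ← hKz]
        norm_num
      rw [hBe, Finset.sum_empty]; norm_num
    · have h5 : 0 < 5 * K * μ := by positivity
      have := (mul_le_mul_iff_of_pos_left h5).mp
        (le_trans hstep (by nlinarith : 2 * K * μ ≤ 5 * K * μ * (2/5)))
      exact this
  have hB1bound : ∑ η ∈ B1, P1 η ≤ 2 / 5 := hgen P1 μ1 hμ1 hP1pos D1
  have hB2bound : ∑ η ∈ B2, P2 η ≤ 2 / 5 := hgen P2 μ2 hμ2 hP2pos D2
  have hB2P1 : ∑ η ∈ B2, P1 η ≤ 2 / 5 + 2 * K := by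
    calc ∑ η ∈ B2, P1 η ≤ ∑ η ∈ B2, (P2 η + |P1 η - P2 η|) := by
          refine Finset.sum_le_sum fun η _ => ?_
          have := le_abs_self (P1 η - P2 η)
          linarith
      _ = ∑ η ∈ B2, P2 η + ∑ η ∈ B2, |P1 η - P2 η| := Finset.sum_add_distrib
      _ ≤ 2 / 5 + 2 * K := by
          refine add_le_add hB2bound (le_trans ?_ hD12)
          exact Finset.sum_le_sum_of_subset_of_nonneg hB2sub fun η _ _ => abs_nonneg _
  have hunion : ∑ η ∈ B1 ∪ B2, P1 η ≤ 9 / 10 := by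
    have hsplit : B1 ∪ B2 = B1 ∪ (B2 \ B1) := (Finset.union_sdiff_self_eq_union).symm
    rw [hsplit, Finset.sum_union Finset.disjoint_sdiff]
    have h1 : ∑ η ∈ B2 \ B1, P1 η ≤ ∑ η ∈ B2, P1 η :=
      Finset.sum_le_sum_of_subset_of_nonneg Finset.sdiff_subset
        (fun η hη _ => (hP1pos η (hB2sub hη)).le)
    linarith
  have hBneI : ∑ η ∈ I \ (B1 ∪ B2), P1 η ≠ 0 := by
    have hsub : B1 ∪ B2 ⊆ I := Finset.union_subset hB1sub hB2sub
    have htot := Finset.sum_sdiff (f := P1) hsub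
    intro hzero
    rw [hzero, zero_add] at htot
    rw [hsumP1] at htot
    linarith
  obtain ⟨η0, hη0⟩ := Finset.nonempty_of_sum_ne_zero hBneI
  rw [Finset.mem_sdiff] at hη0
  obtain ⟨hηI, hηB⟩ := hη0
  have hg1 : |p η0 - μ1| ≤ 5 * K * μ1 := by
    by_contra hc
    exact hηB (Finset.mem_union_left _ (Finset.mem_filter.mpr ⟨hηI, hc⟩))
  have hg2 : |p η0 - μ2| ≤ 5 * K * μ2 := by
    by_contra hc
    exact hηB (Finset.mem_union_right _ (Finset.mem_filter.mpr ⟨hηI, hc⟩))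
  have e : μ1 / μ2 - 1 = (μ1 - μ2) / μ2 := by field_simp
  rw [e, abs_div, abs_of_pos hμ2, div_le_iff₀ hμ2]
  have a1 := abs_le.mp hg1
  have a2 := abs_le.mp hg2
  have hKμ1 : K * μ1 ≤ 1 / 20 * μ1 := mul_le_mul_of_nonneg_right hK hμ1.le
  have hKμ2 : K * μ2 ≤ 1 / 20 * μ2 := mul_le_mul_of_nonneg_right hK hμ2.le
  have hμ1le : μ1 ≤ 5 / 3 * μ2 := by nlinarith [a1.1, a2.2]
  calc |μ1 - μ2| ≤ |μ1 - p η0| + |p η0 - μ2| := abs_sub_le _ _ _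
    _ = |p η0 - μ1| + |p η0 - μ2| := by rw [abs_sub_comm]
    _ ≤ 5 * K * μ1 + 5 * K * μ2 := add_le_add hg1 hg2
    _ ≤ 20 * K * μ2 := by nlinarith [mul_le_mul_of_nonneg_left hμ1le hK0, hμ2.le]

end Stmt14Aux

/-- a permissive spin system with strong spatial mixing at a non-increasing
rate `δ` satisfies the multiplicative ratio bound: whenever every disagreement of `σ, τ` is
at distance at least `ℓ ≥ 2` from `v`, for every spin `a` (with the `0/0 = 1` convention,
expressed here via equality of supports plus the bound on the ratio whenever it is defined)
`min(|μ_v^σ(a)/μ_v^τ(a) - 1|, 1) ≤ 10 q |S_{⌊ℓ/2⌋}(v)| δ(⌊ℓ/2⌋)`. -/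
theorem stmt14 {V : Type*} [Fintype V] [LinearOrder V] {q : ℕ}
    (G : SimpleGraph V) [DecidableRel G.Adj]
    (b : V → Fin q → ℝ) (A : V → V → Fin q → Fin q → ℝ)
    (hb : ∀ v a, 0 ≤ b v a) (hA0 : ∀ u v a c, 0 ≤ A u v a c)
    (hsym : ∀ u v a c, A u v a c = A v u c a)
    (hperm : ∀ (Λ : Finset V) (σ : V → Fin q),
      0 < ∑ x ∈ Finset.univ.filter (fun x : V → Fin q => agreeOn x σ Λ), gibbsW G b A x)
    (δ : ℕ → ℝ) (hδ0 : ∀ ℓ, 0 ≤ δ ℓ) (hδmono : ∀ k l, k ≤ l → δ l ≤ δ k)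
    (hSSM : ∀ (v : V) (Λ : Finset V) (σ τ : V → Fin q) (ℓ : ℕ),
      (∀ u ∈ Λ, σ u ≠ τ u → (ℓ : ℕ∞) ≤ G.edist v u) →
      (∑ a : Fin q, |condP (gibbsMu G b A) Λ σ {v} (fun _ => a) -
          condP (gibbsMu G b A) Λ τ {v} (fun _ => a)|) / 2 ≤ δ ℓ) :
    ∀ (v : V) (Λ : Finset V) (σ τ : V → Fin q) (ℓ : ℕ), 2 ≤ ℓ →
      (∀ u ∈ Λ, σ u ≠ τ u → (ℓ : ℕ∞) ≤ G.edist v u) →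
      ∀ a : Fin q,
        (condP (gibbsMu G b A) Λ σ {v} (fun _ => a) = 0 ↔
          condP (gibbsMu G b A) Λ τ {v} (fun _ => a) = 0) ∧
        (condP (gibbsMu G b A) Λ τ {v} (fun _ => a) ≠ 0 →
          min |condP (gibbsMu G b A) Λ σ {v} (fun _ => a) /
                condP (gibbsMu G b A) Λ τ {v} (fun _ => a) - 1| 1 ≤
            10 * (q : ℝ) * (({u : V | G.edist v u = ((ℓ / 2 : ℕ) : ℕ∞)} : Set V).ncard : ℝ) *
              δ (ℓ / 2)) := by
  intro v Λ σ τ ℓ hℓ2 hdist a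
  classical
  have hZ : ∀ (Λ' : Finset V) (ρ : V → Fin q), 0 < Stmt14Aux.ZZ G b A Λ' ρ := hperm
  have h0 : (∑ x : V → Fin q, gibbsW G b A x) ≠ 0 := by
    have h := hperm ∅ σ
    have he : Finset.univ.filter (fun x : V → Fin q => agreeOn x σ ∅) = Finset.univ := by
      refine Finset.filter_true_of_mem fun x _ => ?_
      intro w hw; exact absurd hw (Finset.notMem_empty w)
    rw [he] at h
    exact h.ne'
  have hRHS0 : 0 ≤ 10 * (q : ℝ) *
      (({u : V | G.edist v u = ((ℓ / 2 : ℕ) : ℕ∞)} : Set V).ncard : ℝ) * δ (ℓ / 2) := by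
    have := hδ0 (ℓ / 2)
    positivity
  -- trivial case q = 1
  have hq1 : 1 ≤ q := a.pos
  by_cases hq : q = 1
  · subst hq
    have hστ : σ = τ := funext fun w => Subsingleton.elim _ _
    subst hστ
    refine ⟨Iff.rfl, fun hne => ?_⟩
    rw [div_self hne, sub_self, abs_zero]
    exact le_trans (min_le_left _ _) hRHS0
  have hq2 : 2 ≤ q := by omega
  by_cases hvΛ : v ∈ Λ
  · -- pinned case
    have hστv : σ v = τ v := by
      by_contra hne
      have h := hdist v hvΛ hne
      rw [SimpleGraph.edist_self] at h
      have : (ℓ : ℕ∞) = 0 := le_antisymm h (by simp)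
      have : ℓ = 0 := by exact_mod_cast this
      omega
    have hval : ∀ ρ : V → Fin q, ρ v = σ v →
        condP (gibbsMu G b A) Λ ρ {v} (fun _ => a) = if σ v = a then 1 else 0 := by
      intro ρ hρv
      rw [Stmt14Aux.condP_eq G b A h0]
      by_cases hra : σ v = a
      · rw [if_pos hra]
        have hfe : Finset.univ.filter (fun x : V → Fin q =>
            agreeOn x ρ Λ ∧ agreeOn x (fun _ => a) {v}) =
            Finset.univ.filter (fun x : V → Fin q => agreeOn x ρ Λ) := by
          refine Finset.filter_congr fun x _ => ?_
          constructor
          · exact fun h => h.1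
          · intro h
            refine ⟨h, fun w hw => ?_⟩
            rw [Finset.mem_singleton] at hw
            show x w = a
            rw [hw, h v hvΛ, hρv, hra]
        rw [hfe]
        exact div_self (hZ Λ ρ).ne'
      · rw [if_neg hra]
        have hfe : Finset.univ.filter (fun x : V → Fin q =>
            agreeOn x ρ Λ ∧ agreeOn x (fun _ => a) {v}) = ∅ := by
          refine Finset.filter_false_of_mem fun x _ => ?_
          rintro ⟨h1, h2⟩
          have hxa : x v = a := h2 v (Finset.mem_singleton_self v)
          have hxσ : x v = σ v := (h1 v hvΛ).trans hρv
          exact hra (hxσ.symm.trans hxa)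
        rw [hfe, Finset.sum_empty, zero_div]
    rw [hval σ rfl, hval τ hστv.symm]
    by_cases hra : σ v = a
    · rw [if_pos hra]
      refine ⟨Iff.rfl, fun _ => ?_⟩
      norm_num
      exact hRHS0
    · rw [if_neg hra]
      exact ⟨Iff.rfl, fun h => absurd rfl h⟩
  -- main case : v ∉ Λ
  set r := ℓ / 2 with hrdef
  have hr1 : 1 ≤ r := by omega
  have hrℓ : r < ℓ := by omega
  have h2r : r + r ≤ ℓ := by omega
  rw [Stmt14Aux.condP_single G b A h0 hvΛ σ a, Stmt14Aux.condP_single G b A h0 hvΛ τ a]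
  set Λv := insert v Λ with hΛv
  set σa := Function.update σ v a with hσa
  set τa := Function.update τ v a with hτa
  set μ1 := Stmt14Aux.ZZ G b A Λv σa / Stmt14Aux.ZZ G b A Λ σ with hμ1def
  set μ2 := Stmt14Aux.ZZ G b A Λv τa / Stmt14Aux.ZZ G b A Λ τ with hμ2def
  have hμ1 : 0 < μ1 := div_pos (hZ _ _) (hZ _ _)
  have hμ2 : 0 < μ2 := div_pos (hZ _ _) (hZ _ _)
  refine ⟨iff_of_false hμ1.ne' hμ2.ne', fun _ => ?_⟩
  rcases le_or_gt 1 (10 * (q : ℝ) *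
      (({u : V | G.edist v u = ((r : ℕ) : ℕ∞)} : Set V).ncard : ℝ) * δ r) with hcap | hcap
  · exact le_trans (min_le_right _ _) hcap
  set S : Set V := {u : V | G.edist v u = ((r : ℕ) : ℕ∞)} with hS
  have hScard : (S.ncard : ℝ) = (S.toFinset.card : ℝ) := by
    rw [Set.ncard_eq_toFinset_card']
  set T := S.toFinset \ Λ with hT
  have hTS : T ⊆ S.toFinset := Finset.sdiff_subset
  have hsphT : ∀ u ∈ T, G.edist v u = (r : ℕ∞) := by
    intro u hu
    have := hTS hu
    rwa [Set.mem_toFinset] at this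
  have hvT : v ∉ T := by
    intro h
    have := hsphT v h
    rw [SimpleGraph.edist_self] at this
    have : (0 : ℕ) = r := by exact_mod_cast this
    omega
  have hdisjT : Disjoint T Λ := Finset.sdiff_disjoint
  have hdisjTv : Disjoint T Λv := by
    rw [hΛv, Finset.disjoint_insert_right]
    exact ⟨hvT, hdisjT⟩
  have hfarv : ∀ u ∈ T, (r : ℕ∞) ≤ G.edist u v := by
    intro u hu
    rw [SimpleGraph.edist_comm]
    exact (hsphT u hu).ge
  have hfarΛ : ∀ u ∈ T, ∀ w ∈ Λ, σ w ≠ τ w → (r : ℕ∞) ≤ G.edist u w := by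
    intro u hu w hw hne
    have h1 : (ℓ : ℕ∞) ≤ G.edist v w := hdist w hw hne
    have h2 : G.edist v w ≤ G.edist v u + G.edist u w := SimpleGraph.edist_triangle
    rw [hsphT u hu] at h2
    have h3 : (r : ℕ∞) + (r : ℕ∞) ≤ (r : ℕ∞) + G.edist u w := by
      calc (r : ℕ∞) + (r : ℕ∞) = ((r + r : ℕ) : ℕ∞) := by rw [Nat.cast_add]
        _ ≤ (ℓ : ℕ∞) := by exact_mod_cast h2r
        _ ≤ _ := le_trans h1 h2
    exact (WithTop.add_le_add_iff_left (by simp : (r : ℕ∞) ≠ ⊤)).mp h3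
  have hSSM1 : ∀ (u : V) (Λ' : Finset V) (σ' τ' : V → Fin q),
      (∀ w ∈ Λ', σ' w ≠ τ' w → (r : ℕ∞) ≤ G.edist u w) →
      (∑ c : Fin q, |condP (gibbsMu G b A) Λ' σ' {u} (fun _ => c) -
          condP (gibbsMu G b A) Λ' τ' {u} (fun _ => c)|) / 2 ≤ δ r :=
    fun u Λ' σ' τ' hcond => hSSM u Λ' σ' τ' r hcond
  set K := (T.card : ℝ) * δ r with hK
  have hK0 : 0 ≤ K := mul_nonneg (Nat.cast_nonneg _) (hδ0 r)
  have hcard : (T.card : ℝ) ≤ (S.ncard : ℝ) := by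
    rw [hScard]
    exact_mod_cast Finset.card_le_card hTS
  have hKle : K ≤ 1 / 20 := by
    have hδr := hδ0 r
    have hq2' : (2 : ℝ) ≤ (q : ℝ) := by exact_mod_cast hq2
    have hncard0 : (0 : ℝ) ≤ (S.ncard : ℝ) := Nat.cast_nonneg _
    nlinarith [mul_le_mul_of_nonneg_right hcard hδr]
  have hsphΔ : ∀ w, G.edist v w = (r : ℕ∞) → w ∈ Λ ∪ T := by
    intro w hw
    by_cases hwΛ : w ∈ Λ
    · exact Finset.mem_union_left _ hwΛ
    · refine Finset.mem_union_right _ ?_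
      rw [hT, Finset.mem_sdiff, Set.mem_toFinset]
      exact ⟨hw, hwΛ⟩
  have hvΛT : v ∉ Λ ∪ T := by
    intro h
    rcases Finset.mem_union.mp h with h | h
    · exact hvΛ h
    · exact hvT h
  have hagA : ∀ η : V → Fin q, ∀ w ∈ Λ ∪ T, G.edist v w ≤ (r : ℕ∞) →
      Stmt14Aux.ovr T η τ w = Stmt14Aux.ovr T η σ w := by
    intro η w hw hle
    by_cases hwT : w ∈ T
    · rw [Stmt14Aux.ovr_eq_on hwT, Stmt14Aux.ovr_eq_on hwT]
    · rw [Stmt14Aux.ovr_eq_on_compl hwT, Stmt14Aux.ovr_eq_on_compl hwT]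
      have hwΛ : w ∈ Λ := (Finset.mem_union.mp hw).resolve_right hwT
      by_contra hne
      have hd := hdist w hwΛ (Ne.symm hne)
      have hlr : (ℓ : ℕ∞) ≤ (r : ℕ∞) := le_trans hd hle
      have : ℓ ≤ r := by exact_mod_cast hlr
      omega
  have plem : ∀ η : V → Fin q,
      Stmt14Aux.ZZ G b A (Λv ∪ T) (Stmt14Aux.ovr T η τa) /
        Stmt14Aux.ZZ G b A (Λ ∪ T) (Stmt14Aux.ovr T η τ)
      = Stmt14Aux.ZZ G b A (Λv ∪ T) (Stmt14Aux.ovr T η σa) /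
        Stmt14Aux.ZZ G b A (Λ ∪ T) (Stmt14Aux.ovr T η σ) := by
    intro η
    have hcross := Stmt14Aux.lemA G b A v r hr1 (Λ ∪ T) hvΛT hsphΔ a
      (Stmt14Aux.ovr T η τ) (Stmt14Aux.ovr T η σ) (hagA η)
    rw [Stmt14Aux.update_ovr hvT, Stmt14Aux.update_ovr hvT, ← Finset.insert_union] at hcross
    rw [div_eq_div_iff (hZ _ _).ne' (hZ _ _).ne']
    exact hcross
  have hD12 : ∑ η ∈ Stmt14Aux.Rep T σ,
      |Stmt14Aux.ZZ G b A (Λ ∪ T) (Stmt14Aux.ovr T η σ) / Stmt14Aux.ZZ G b A Λ σ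
        - Stmt14Aux.ZZ G b A (Λ ∪ T) (Stmt14Aux.ovr T η τ) / Stmt14Aux.ZZ G b A Λ τ|
      ≤ 2 * K := by
    have h := Stmt14Aux.L3 G b A hperm h0 δ r (hδ0 r) hSSM1 T Λ σ σ τ hdisjT hfarΛ
    calc _ ≤ 2 * (T.card : ℝ) * δ r := h
      _ = 2 * K := by rw [hK]; ring
  have hQP1 : ∑ η ∈ Stmt14Aux.Rep T σ,
      |Stmt14Aux.ZZ G b A (Λv ∪ T) (Stmt14Aux.ovr T η σa) / Stmt14Aux.ZZ G b A Λv σa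
        - Stmt14Aux.ZZ G b A (Λ ∪ T) (Stmt14Aux.ovr T η σ) / Stmt14Aux.ZZ G b A Λ σ|
      ≤ 2 * K := by
    have h := Stmt14Aux.mixture G b A hperm h0 δ r (hδ0 r) hSSM1 T Λ v hvT hvΛ hdisjT
      hfarv σ σ a
    calc _ ≤ 2 * (T.card : ℝ) * δ r := h
      _ = 2 * K := by rw [hK]; ring
  have hQP2 : ∑ η ∈ Stmt14Aux.Rep T σ,
      |Stmt14Aux.ZZ G b A (Λv ∪ T) (Stmt14Aux.ovr T η τa) / Stmt14Aux.ZZ G b A Λv τa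
        - Stmt14Aux.ZZ G b A (Λ ∪ T) (Stmt14Aux.ovr T η τ) / Stmt14Aux.ZZ G b A Λ τ|
      ≤ 2 * K := by
    have h := Stmt14Aux.mixture G b A hperm h0 δ r (hδ0 r) hSSM1 T Λ v hvT hvΛ hdisjT
      hfarv σ τ a
    calc _ ≤ 2 * (T.card : ℝ) * δ r := h
      _ = 2 * K := by rw [hK]; ring
  have hmain : |μ1 / μ2 - 1| ≤ 20 * K := by
    refine Stmt14Aux.assembly (Stmt14Aux.Rep T σ)
      (fun η => Stmt14Aux.ZZ G b A (Λ ∪ T) (Stmt14Aux.ovr T η σ) / Stmt14Aux.ZZ G b A Λ σ)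
      (fun η => Stmt14Aux.ZZ G b A (Λ ∪ T) (Stmt14Aux.ovr T η τ) / Stmt14Aux.ZZ G b A Λ τ)
      (fun η => Stmt14Aux.ZZ G b A (Λv ∪ T) (Stmt14Aux.ovr T η σa) / Stmt14Aux.ZZ G b A Λv σa)
      (fun η => Stmt14Aux.ZZ G b A (Λv ∪ T) (Stmt14Aux.ovr T η τa) / Stmt14Aux.ZZ G b A Λv τa)
      (fun η => Stmt14Aux.ZZ G b A (Λv ∪ T) (Stmt14Aux.ovr T η σa) /
        Stmt14Aux.ZZ G b A (Λ ∪ T) (Stmt14Aux.ovr T η σ))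
      μ1 μ2 K hμ1 hμ2
      (fun η _ => div_pos (hZ _ _) (hZ _ _))
      (fun η _ => div_pos (hZ _ _) (hZ _ _))
      (Stmt14Aux.sum_Rep_ZZ_div G b A T Λ σ σ hdisjT (hZ Λ σ).ne')
      ?_ ?_ hD12 hQP1 hQP2 hK0 hKle
    · intro η _
      beta_reduce
      rw [hμ1def]
      rw [Stmt14Aux.div_chain (hZ Λv σa).ne']
      rw [mul_comm
        (Stmt14Aux.ZZ G b A (Λ ∪ T) (Stmt14Aux.ovr T η σ) / Stmt14Aux.ZZ G b A Λ σ)]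
      rw [Stmt14Aux.div_chain (hZ (Λ ∪ T) (Stmt14Aux.ovr T η σ)).ne']
    · intro η _
      beta_reduce
      rw [hμ2def]
      rw [Stmt14Aux.div_chain (hZ Λv τa).ne']
      rw [mul_comm
        (Stmt14Aux.ZZ G b A (Λ ∪ T) (Stmt14Aux.ovr T η τ) / Stmt14Aux.ZZ G b A Λ τ)]
      rw [← plem η]
      rw [Stmt14Aux.div_chain (hZ (Λ ∪ T) (Stmt14Aux.ovr T η τ)).ne']
  have hfinal : 20 * K ≤ 10 * (q : ℝ) * ((S.ncard : ℕ) : ℝ) * δ r := by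
    have hq2' : (2 : ℝ) ≤ (q : ℝ) := by exact_mod_cast hq2
    have hδr := hδ0 r
    have h1 : (T.card : ℝ) * δ r ≤ (S.ncard : ℝ) * δ r :=
      mul_le_mul_of_nonneg_right hcard hδr
    have h2 : 0 ≤ (S.ncard : ℝ) * δ r :=
      mul_nonneg (Nat.cast_nonneg _) hδr
    rw [hK]
    nlinarith
  exact le_trans (min_le_left _ _) (le_trans hmain hfinal)
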